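/- Let α be irrational, χ(m₁,m₂) = (−1)^{⌊m₂/2⌋+m₁}, and let A ⊂ ℤ² be the set with indicator 𝟙_A(m₁,m₂) = χ(m₁,m₂)({αm₁}+{αm₂}−{α(m₁+m₂)}−1/2)+1/2. Let F = {t₁(0,2)+t₂(1,0)+t₃(2,−2) : t₁,t₂,t₃ ∈ {0,1}}. Then 𝟙_F * 𝟙_A = 4 identically, i.e., A is a level 4 tiling of ℤ² by F. -/

import Mathlib

/-- The set `A ⊂ ℤ²` with indicator
`𝟙_A(m₁,m₂) = χ(m₁,m₂)({αm₁}+{αm₂}−{α(m₁+m₂)}−1/2)+1/2`, where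
`χ(m₁,m₂) = (−1)^{⌊m₂/2⌋+m₁}` and `α` is irrational, is a level `4` tiling of `ℤ²` by the
eight-element tile `F = {t₁(0,2)+t₂(1,0)+t₃(2,−2) : t₁,t₂,t₃ ∈ {0,1}}`. -/
theorem stmt_10 (α : ℝ) (hα : Irrational α) (a : ℤ × ℤ → ℝ)
    (ha : ∀ m : ℤ × ℤ, a m = ((Int.negOnePow (⌊(m.2 : ℚ) / 2⌋ + m.1) : ℤˣ) : ℝ)
        * (Int.fract (α * m.1) + Int.fract (α * m.2) - Int.fract (α * (m.1 + m.2)) - 1 / 2)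
        + 1 / 2) :
    ∀ x : ℤ × ℤ,
      ∑ t ∈ ({0, 1} : Finset ℤ) ×ˢ ({0, 1} : Finset ℤ) ×ˢ ({0, 1} : Finset ℤ),
        a (x - (t.1 • ((0 : ℤ), (2 : ℤ)) + t.2.1 • ((1 : ℤ), (0 : ℤ))
            + t.2.2 • ((2 : ℤ), (-2 : ℤ)))) = 4 := by
  rintro ⟨n₁, n₂⟩
  rw [show ({0, 1} : Finset ℤ) ×ˢ ({0, 1} : Finset ℤ) ×ˢ ({0, 1} : Finset ℤ) =
    {(0,0,0),(0,0,1),(0,1,0),(0,1,1),(1,0,0),(1,0,1),(1,1,0),(1,1,1)} from rfl]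
  rw [Finset.sum_insert (by decide), Finset.sum_insert (by decide),
    Finset.sum_insert (by decide), Finset.sum_insert (by decide),
    Finset.sum_insert (by decide), Finset.sum_insert (by decide),
    Finset.sum_insert (by decide), Finset.sum_singleton]
  simp only [ha, Prod.smul_mk, Prod.mk_add_mk, Prod.mk_sub_mk, smul_eq_mul]
  norm_num
  rw [show ((n₂:ℚ)+2)/2 = (n₂:ℚ)/2 + 1 by ring, Int.floor_add_one,
    show ((n₂:ℚ)-2)/2 = (n₂:ℚ)/2 - 1 by ring, Int.floor_sub_one]
  set K : ℤ := ⌊(n₂:ℚ)/2⌋ with hK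
  rw [show K + 1 + (n₁ - 2) = (K + n₁) + (-1) by ring,
    show K + (n₁ - 1) = (K + n₁) + (-1) by ring,
    show K + 1 + (n₁ - 3) = (K + n₁) + (-2) by ring,
    show K - 1 + n₁ = (K + n₁) + (-1) by ring,
    show K + (n₁ - 2) = (K + n₁) + (-2) by ring,
    show K - 1 + (n₁ - 1) = (K + n₁) + (-2) by ring,
    show K + (n₁ - 3) = (K + n₁) + (-3) by ring,
    ]
  simp only [← Int.coe_negOnePow ℝ]
  simp only [Int.negOnePow_add]
  have h1 : ((-1 : ℤ).negOnePow : ℤ) = -1 := by decide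
  have h2 : ((-2 : ℤ).negOnePow : ℤ) = 1 := by decide
  have h3 : ((-3 : ℤ).negOnePow : ℤ) = -1 := by decide
  simp only [Units.val_mul, Int.cast_mul, h1, h2, h3]
  push_cast [h1, h2, h3]
  generalize ((K.negOnePow : ℤ) : ℝ) = b
  generalize ((n₁.negOnePow : ℤ) : ℝ) = c
  ring_nf
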